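/- Let L = tridiag(-1,2,-1) be M×M and I the M×M identity. For any real coefficients a > 0, b ≥ 0 and any vector v ∈ ℝ^{M²}, ‖(a I⊗I + b(I⊗L + L⊗I)) v‖² ≥ (a²/32 + ab/2 + b²) ((I⊗L² + L²⊗I) v, v). -/

import Mathlib

open Kronecker Matrix

/-- `tridiag M b a` is the `M × M` symmetric tridiagonal Toeplitz matrix. -/
def tridiag (M : ℕ) (b a : ℝ) : Matrix (Fin M) (Fin M) ℝ :=
  fun i j =>
    if (i : ℕ) = j then a
    else if (i : ℕ) + 1 = j ∨ (j : ℕ) + 1 = i then b else 0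

private lemma sum_eq_pair {n : ℕ} (f : Fin n → ℝ) (p q : Fin n) (hpq : p ≠ q)
    (h : ∀ i, i ≠ p → i ≠ q → f i = 0) : ∑ i, f i = f p + f q := by
  rw [← Finset.sum_pair hpq]
  refine (Finset.sum_subset (Finset.subset_univ _) fun i _ hi => ?_).symm
  exact h i (fun h' => hi (by simp [h'])) (fun h' => hi (by simp [h']))

/-- The bidiagonal factor. -/
private def dmat (M : ℕ) (c : ℝ) : Matrix (Fin (M + 1)) (Fin M) ℝ :=
  fun i j => if (i : ℕ) = j then 1 else if (j : ℕ) + 1 = i then c else 0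

private lemma dmat_mul (M : ℕ) (c : ℝ) :
    (dmat M c)ᵀ * dmat M c = tridiag M c (1 + c ^ 2) := by
  ext j k
  rw [Matrix.mul_apply]
  simp only [transpose_apply]
  rw [sum_eq_pair _ j.castSucc j.succ
      (by simp [Fin.ext_iff])
      (by
        intro i hip hiq
        have h1 : ¬ ((i : ℕ) = (j : ℕ)) := fun h => hip (Fin.ext (by simp [h]))
        have h2 : ¬ ((j : ℕ) + 1 = (i : ℕ)) := fun h => hiq (Fin.ext (by simp [← h]))
        simp only [dmat, if_neg h1, if_neg h2, zero_mul])]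
  simp only [dmat, tridiag, Fin.coe_castSucc, Fin.val_succ]
  split_ifs <;> (first | ring1 | (exfalso; omega))

private lemma conjT_eq_transpose {m n : Type*} (A : Matrix m n ℝ) : Aᴴ = Aᵀ := by
  ext i j; simp [conjTranspose_apply]

private lemma tridiag_psd (M : ℕ) (c : ℝ) : (tridiag M c (1 + c ^ 2)).PosSemidef := by
  have := posSemidef_conjTranspose_mul_self (dmat M c)
  rwa [conjT_eq_transpose, dmat_mul] at this

private lemma L_psd (M : ℕ) : (tridiag M (-1) 2).PosSemidef := by
  have := tridiag_psd M (-1)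
  norm_num at this
  exact this

private lemma T_psd (M : ℕ) :
    ((4 : ℝ) • (1 : Matrix (Fin M) (Fin M) ℝ) - tridiag M (-1) 2).PosSemidef := by
  have h : (4 : ℝ) • (1 : Matrix (Fin M) (Fin M) ℝ) - tridiag M (-1) 2
      = tridiag M 1 (1 + 1 ^ 2) := by
    ext i j
    by_cases hij : i = j
    · subst hij; simp [tridiag, Matrix.one_apply]; norm_num
    · have : ¬ ((i : ℕ) = (j : ℕ)) := fun h => hij (Fin.ext h)
      simp [tridiag, Matrix.one_apply, hij, this]
      split_ifs <;> norm_num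
  rw [h]; exact tridiag_psd M 1

open scoped MatrixOrder in
/-- `4L - L²` is PSD. -/
private lemma W_psd (M : ℕ) :
    ((4 : ℝ) • tridiag M (-1) 2 - tridiag M (-1) 2 * tridiag M (-1) 2).PosSemidef := by
  set L := tridiag M (-1) 2 with hLdef
  have hL := L_psd M
  set s := CFC.sqrt L with hs
  have hss : s * s = L := CFC.sqrt_mul_sqrt_self L hL.nonneg
  have hherm : sᴴ = s := (CFC.sqrt_nonneg L).posSemidef.isHermitian
  have key : s * ((4 : ℝ) • (1 : Matrix (Fin M) (Fin M) ℝ) - L) * sᴴ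
      = (4 : ℝ) • L - L * L := by
    rw [hherm, ← hss]
    noncomm_ring
  exact key ▸ (T_psd M).mul_mul_conjTranspose_same s

private lemma kron_conjT {m n : Type*} [Fintype m] [Fintype n]
    (A : Matrix m m ℝ) (B : Matrix n n ℝ) : (A ⊗ₖ B)ᴴ = Aᴴ ⊗ₖ Bᴴ := by
  ext i j
  simp [conjTranspose_apply]

private lemma kron_psd {m n : Type*} [Fintype m] [Fintype n] [DecidableEq m] [DecidableEq n]
    {A : Matrix m m ℝ} {B : Matrix n n ℝ} (hA : A.PosSemidef) (hB : B.PosSemidef) :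
    (A ⊗ₖ B).PosSemidef := by
  exact hA.kronecker hB

private lemma kron_sub {m n : Type*} (A : Matrix m m ℝ) (B C : Matrix n n ℝ) :
    A ⊗ₖ (B - C) = A ⊗ₖ B - A ⊗ₖ C := by
  ext i j; simp [mul_sub]

private lemma sub_kron {m n : Type*} (A B : Matrix m m ℝ) (C : Matrix n n ℝ) :
    (A - B) ⊗ₖ C = A ⊗ₖ C - B ⊗ₖ C := by
  ext i j; simp [sub_mul]

private lemma one_psd {m : Type*} [Fintype m] [DecidableEq m] :
    (1 : Matrix m m ℝ).PosSemidef := by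
  rw [← Matrix.diagonal_one]
  exact PosSemidef.diagonal (fun i => zero_le_one)

/-- With `L = tridiag(-1,2,-1)` the `M × M` discrete Laplacian, for any `a > 0`, `b ≥ 0`
and any `v ∈ ℝ^{M²}`:
`‖(a I⊗I + b(I⊗L + L⊗I))v‖² ≥ (a²/32 + ab/2 + b²)((I⊗L² + L²⊗I)v, v)`. -/
theorem twoD_lower_bound (M : ℕ) (a b : ℝ) (ha : 0 < a) (hb : 0 ≤ b)
    (v : Fin M × Fin M → ℝ) :
    let L := tridiag M (-1) 2
    let I1 : Matrix (Fin M) (Fin M) ℝ := 1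
    (a ^ 2 / 32 + a * b / 2 + b ^ 2) * (((I1 ⊗ₖ (L * L) + (L * L) ⊗ₖ I1) *ᵥ v) ⬝ᵥ v) ≤
      ((a • (I1 ⊗ₖ I1) + b • (I1 ⊗ₖ L + L ⊗ₖ I1)) *ᵥ v) ⬝ᵥ
        ((a • (I1 ⊗ₖ I1) + b • (I1 ⊗ₖ L + L ⊗ₖ I1)) *ᵥ v) := by
  intro L I1
  have hI1 : I1 = (1 : Matrix (Fin M) (Fin M) ℝ) := rfl
  rw [hI1]
  set L1 : Matrix (Fin M) (Fin M) ℝ := 1 with hL1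
  -- abbreviations
  set S : Matrix (Fin M × Fin M) (Fin M × Fin M) ℝ := L1 ⊗ₖ L + L ⊗ₖ L1 with hSdef
  set K : Matrix (Fin M × Fin M) (Fin M × Fin M) ℝ := L1 ⊗ₖ (L * L) + (L * L) ⊗ₖ L1 with hKdef
  set P : Matrix (Fin M × Fin M) (Fin M × Fin M) ℝ := a • (L1 ⊗ₖ L1) + b • S with hPdef
  have hL := L_psd M
  have hLsym : Lᵀ = L := by
    ext i j
    simp only [transpose_apply, L, tridiag]
    split_ifs <;> (first | rfl | (exfalso; omega))
  have honeone : L1 ⊗ₖ L1 = (1 : Matrix (Fin M × Fin M) (Fin M × Fin M) ℝ) :=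
    Matrix.one_kronecker_one
  -- S² = K + 2 L⊗L
  have hS2 : S * S = K + (2 : ℝ) • (L ⊗ₖ L) := by
    rw [hSdef, hKdef]
    simp only [Matrix.add_mul, Matrix.mul_add, ← mul_kronecker_mul, Matrix.one_mul,
      Matrix.mul_one, hL1]
    rw [two_smul]
    abel
  -- quadratic form nonnegativity
  have hq : ∀ X : Matrix (Fin M × Fin M) (Fin M × Fin M) ℝ,
      X.PosSemidef → 0 ≤ (X *ᵥ v) ⬝ᵥ v := by
    intro X hX
    have := hX.dotProduct_mulVec_nonneg v
    simpa [dotProduct_comm] using this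
  -- PSD blocks
  set W : Matrix (Fin M) (Fin M) ℝ := (4 : ℝ) • L - L * L with hWdef
  have hW : W.PosSemidef := W_psd M
  set T : Matrix (Fin M) (Fin M) ℝ := (4 : ℝ) • 1 - L with hTdef
  have hT : T.PosSemidef := T_psd M
  set P₁ : Matrix (Fin M × Fin M) (Fin M × Fin M) ℝ := (32 : ℝ) • 1 - K with hP1def
  set P₂ : Matrix (Fin M × Fin M) (Fin M × Fin M) ℝ := (4 : ℝ) • S - K with hP2def
  set P₃ : Matrix (Fin M × Fin M) (Fin M × Fin M) ℝ := L ⊗ₖ L with hP3def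
  have hP3 : P₃.PosSemidef := kron_psd hL hL
  have hP2 : P₂.PosSemidef := by
    have h2 : P₂ = L1 ⊗ₖ W + W ⊗ₖ L1 := by
      rw [hP2def, hWdef, hSdef, hKdef, kron_sub, sub_kron, kronecker_smul, smul_kronecker,
        smul_add]
      abel
    rw [h2]
    exact (kron_psd one_psd hW).add (kron_psd hW one_psd)
  have hP1 : P₁.PosSemidef := by
    set U : Matrix (Fin M) (Fin M) ℝ := (16 : ℝ) • 1 - L * L with hUdef
    have hU : U.PosSemidef := by
      have h3 : U = T + T + T + T + W := by
        rw [hUdef, hTdef, hWdef]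
        module
      rw [h3]
      exact (((hT.add hT).add hT).add hT).add hW
    have h4 : P₁ = L1 ⊗ₖ U + U ⊗ₖ L1 := by
      rw [hP1def, hUdef, hKdef, kron_sub, sub_kron, kronecker_smul, smul_kronecker, hL1,
        Matrix.one_kronecker_one]
      module
    rw [h4]
    exact (kron_psd one_psd hU).add (kron_psd hU one_psd)
  -- symmetry of P
  have hPsym : Pᵀ = P := by
    rw [hPdef, hSdef]
    rw [transpose_add, transpose_smul, transpose_smul, transpose_add,
      ← kroneckerMap_transpose, ← kroneckerMap_transpose, ← kroneckerMap_transpose,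
      hLsym, hL1, transpose_one]
  -- (P v)·(P v) = ((P*P) v)·v
  have hPP : (P *ᵥ v) ⬝ᵥ (P *ᵥ v) = ((P * P) *ᵥ v) ⬝ᵥ v := by
    rw [dotProduct_mulVec, ← mulVec_transpose, hPsym, mulVec_mulVec]
  -- matrix identity
  have hmat : P * P = (a ^ 2 / 32 + a * b / 2 + b ^ 2) • K
      + (a ^ 2 / 32) • P₁ + (a * b / 2) • P₂ + (2 * b ^ 2) • P₃ := by
    simp only [hPdef, hP1def, hP2def, hP3def, honeone, Matrix.add_mul, Matrix.mul_add,
      smul_mul_assoc, Matrix.mul_smul, Matrix.one_mul, Matrix.mul_one, hS2]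
    match_scalars <;> ring
  rw [hPP, hmat]
  simp only [add_mulVec, smul_mulVec, add_dotProduct, smul_dotProduct, smul_eq_mul]
  have h1 := mul_nonneg (by positivity : (0:ℝ) ≤ a ^ 2 / 32) (hq P₁ hP1)
  have h2 := mul_nonneg (by positivity : (0:ℝ) ≤ a * b / 2) (hq P₂ hP2)
  have h3 := mul_nonneg (by positivity : (0:ℝ) ≤ 2 * b ^ 2) (hq P₃ hP3)
  linarith
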